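/- Let p be an odd prime congruent to 1 mod 4, and let A be an integer with 0 < 2A < n ≤ p. Then for every i with 0 ≤ i < n, the set of residues mod n of the least positive residues of A·x^((p+1)/2) mod p, as x ranges over I_i = {x : 1 ≤ x ≤ p-1, x ≡ i mod n}, has cardinality at most 2A; in particular f(I_i) misses at least n - 2A residue classes mod n. -/
import Mathlib

theorem stmt_8 (p : ℕ) (n A i : ℤ) (hp : p.Prime) (hp4 : p % 4 = 1)
    (hA : 0 < A) (h2A : 2 * A < n) (hnp : n ≤ (p : ℤ))
    (hi : 0 ≤ i) (hin : i < n) :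
    ((((Finset.Icc 1 ((p : ℤ) - 1)).filter (fun x => x % n = i)).image
        (fun x => ((A * x ^ ((p + 1) / 2)) % (p : ℤ)) % n)).card : ℤ) ≤ 2 * A ∧
    (((Finset.Icc 0 (n - 1)).filter (fun j =>
        j ∉ (((Finset.Icc 1 ((p : ℤ) - 1)).filter (fun x => x % n = i)).image
          (fun x => ((A * x ^ ((p + 1) / 2)) % (p : ℤ)) % n)))).card : ℤ)
      ≥ n - 2 * A := by
  have hp5 : 2 ≤ p := hp.two_le
  have hpz : (0:ℤ) < (p:ℤ) := by exact_mod_cast hp.pos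
  have hn : 0 < n := by linarith
  haveI : Fact p.Prime := ⟨hp⟩
  set T := (((Finset.Icc 1 ((p : ℤ) - 1)).filter (fun x => x % n = i)).image
      (fun x => ((A * x ^ ((p + 1) / 2)) % (p : ℤ)) % n)) with hT
  set S := ((Finset.Icc (0:ℤ) (A-1)).image (fun k => (A*i - (p:ℤ)*k) % n)) ∪
           ((Finset.Icc (1:ℤ) A).image (fun k => ((p:ℤ)*k - A*i) % n)) with hS
  have hsub : T ⊆ S := by
    intro y hy
    rw [hT] at hy
    simp only [Finset.mem_image, Finset.mem_filter, Finset.mem_Icc] at hy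
    obtain ⟨x, ⟨⟨hx1, hx2⟩, hxi⟩, rfl⟩ := hy
    have hpx : ((x : ZMod p)) ≠ 0 := by
      rw [Ne, ZMod.intCast_zmod_eq_zero_iff_dvd]
      intro hdvd
      have := Int.le_of_dvd (by linarith) hdvd
      omega
    have hsq : (x : ZMod p)^((p-1)/2) = 1 ∨ (x:ZMod p)^((p-1)/2) = -1 := by
      have h1 : (x:ZMod p)^((p-1)/2) * (x:ZMod p)^((p-1)/2) = 1 := by
        rw [← pow_add]
        have h2 : (p-1)/2 + (p-1)/2 = p - 1 := by omega
        rw [h2]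
        exact ZMod.pow_card_sub_one_eq_one hpx
      exact mul_self_eq_one_iff.mp h1
    have hee : (p+1)/2 = (p-1)/2 + 1 := by omega
    have hkey : (p:ℤ) ∣ A * x ^ ((p+1)/2) - A * x ∨ (p:ℤ) ∣ A * x ^ ((p+1)/2) + A * x := by
      rcases hsq with h | h
      · left
        rw [← ZMod.intCast_zmod_eq_zero_iff_dvd]
        push_cast
        rw [hee, pow_succ, h]
        ring
      · right
        rw [← ZMod.intCast_zmod_eq_zero_iff_dvd]
        push_cast
        rw [hee, pow_succ, h]
        ring
    set y := (A * x ^ ((p+1)/2)) % (p:ℤ) with hy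
    have hy0 : 0 ≤ y := Int.emod_nonneg _ (ne_of_gt hpz)
    have hyp : y < (p:ℤ) := Int.emod_lt_of_pos _ hpz
    have hyd : (p:ℤ) ∣ A * x ^ ((p+1)/2) - y :=
      Int.dvd_self_sub_of_emod_eq rfl
    have hmx : x ≡ i [ZMOD n] := by
      unfold Int.ModEq
      rw [hxi, Int.emod_eq_of_lt hi hin]
    have hAx1 : A ≤ A*x := by nlinarith
    have hAx2 : A*x ≤ A*((p:ℤ)-1) := by nlinarith
    rw [hS, Finset.mem_union]
    rcases hkey with h | h
    · left
      have hd : (p:ℤ) ∣ A*x - y := by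
        have h' := dvd_sub hyd h
        have heq : A*x - y = (A * x ^ ((p+1)/2) - y) - (A * x ^ ((p+1)/2) - A*x) := by ring
        rw [heq]; exact h'
      obtain ⟨k, hk⟩ := hd
      have hk0 : 0 ≤ k := by
        by_contra hc
        push_neg at hc
        have : k ≤ -1 := by omega
        nlinarith
      have hkA : k ≤ A - 1 := by
        by_contra hc
        push_neg at hc
        have : A ≤ k := by omega
        nlinarith
      refine Finset.mem_image.mpr ⟨k, Finset.mem_Icc.mpr ⟨hk0, hkA⟩, ?_⟩
      have hye : y = A*x - (p:ℤ)*k := by linarith [hk]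
      have hmod : A*i - (p:ℤ)*k ≡ A*x - (p:ℤ)*k [ZMOD n] :=
        Int.ModEq.sub_right _ (hmx.symm.mul_left A)
      rw [hye]
      exact hmod
    · right
      have hd : (p:ℤ) ∣ A*x + y := by
        have h' := dvd_sub h hyd
        have heq : A*x + y = (A * x ^ ((p+1)/2) + A*x) - (A * x ^ ((p+1)/2) - y) := by ring
        rw [heq]; exact h'
      obtain ⟨k, hk⟩ := hd
      have hk0 : 1 ≤ k := by
        by_contra hc
        push_neg at hc
        have : k ≤ 0 := by omega
        nlinarith
      have hkA : k ≤ A := by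
        by_contra hc
        push_neg at hc
        have : A + 1 ≤ k := by omega
        nlinarith
      refine Finset.mem_image.mpr ⟨k, Finset.mem_Icc.mpr ⟨hk0, hkA⟩, ?_⟩
      have hye : y = (p:ℤ)*k - A*x := by linarith [hk]
      have hmod : (p:ℤ)*k - A*i ≡ (p:ℤ)*k - A*x [ZMOD n] :=
        Int.ModEq.sub_left _ (hmx.symm.mul_left A)
      rw [hye]
      exact hmod
  have hScard : (S.card : ℤ) ≤ 2 * A := by
    have h1 := Finset.card_union_le ((Finset.Icc (0:ℤ) (A-1)).image (fun k => (A*i - (p:ℤ)*k) % n))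
      ((Finset.Icc (1:ℤ) A).image (fun k => ((p:ℤ)*k - A*i) % n))
    have h2 := Finset.card_image_le (s := Finset.Icc (0:ℤ) (A-1)) (f := fun k => (A*i - (p:ℤ)*k) % n)
    have h3 := Finset.card_image_le (s := Finset.Icc (1:ℤ) A) (f := fun k => ((p:ℤ)*k - A*i) % n)
    have h4 : (Finset.Icc (0:ℤ) (A-1)).card = A.toNat := by
      rw [Int.card_Icc]; congr 1; omega
    have h5 : (Finset.Icc (1:ℤ) A).card = A.toNat := by
      rw [Int.card_Icc]; congr 1; omega
    rw [← hS] at h1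
    have h6 : S.card ≤ A.toNat + A.toNat := by omega
    have h7 : (A.toNat : ℤ) = A := Int.toNat_of_nonneg hA.le
    have := (Nat.cast_le (α := ℤ)).mpr h6
    push_cast at this
    omega
  have hTcard : (T.card : ℤ) ≤ 2 * A := by
    have := Finset.card_le_card hsub
    have := (Nat.cast_le (α := ℤ)).mpr this
    omega
  refine ⟨hTcard, ?_⟩
  classical
  have hsplit := Finset.card_filter_add_card_filter_not
    (s := Finset.Icc (0:ℤ) (n-1)) (p := fun j => j ∈ T)
  have hU : (Finset.Icc (0:ℤ) (n-1)).card = n.toNat := by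
    rw [Int.card_Icc]; congr 1; omega
  have hfil : ((Finset.Icc (0:ℤ) (n-1)).filter (fun j => j ∈ T)).card ≤ T.card := by
    apply Finset.card_le_card
    intro j hj
    exact (Finset.mem_filter.mp hj).2
  have hnn : (n.toNat : ℤ) = n := Int.toNat_of_nonneg hn.le
  have hcast1 := (Nat.cast_le (α := ℤ)).mpr hfil
  rw [hU] at hsplit
  have hcast2 := congrArg (Nat.cast (R := ℤ)) hsplit
  push_cast at hcast2
  omega
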